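/- arXiv:1310.0371 — 2 statements merged into one kernel-verified Lean document; each statement's English description precedes it below -/
import Mathlib

section
/- Let x ∈ ℝ², let F and O be finite index sets with points p : F → ℝ² and o : O → ℝ², and assume x ≠ p j and ‖x − p j‖ ≠ R_s for every j ∈ F, and x ≠ o k for every k ∈ O. Then the function β : ℝ² → ℝ given by β(y) = (∏_{j∈F} b(‖y − p j‖)) · (∏_{k∈O} B(‖y − o k‖)) is differentiable at x, and its gradient satisfies ‖∇β(x)‖ ≤ |F| · (2/δ₂) + |O| · (2/δ₁). -/
open Finset

/-- The connectivity constraint function `b` from the paper. -/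
noncomputable def bfun (Rs δ₂ : ℝ) (d : ℝ) : ℝ :=
  if d < Rs - δ₂ then 1
  else if d ≤ Rs then -(1/δ₂^2) * (d + 2*δ₂ - Rs)^2 + (2/δ₂) * (d + 2*δ₂ - Rs)
  else 0

/-- The collision constraint function `B` from the paper. -/
noncomputable def Bfun (δ₁ : ℝ) (d : ℝ) : ℝ :=
  if d ≤ δ₁ then -d^2/δ₁^2 + 2*d/δ₁ else 1

lemma hasDerivAt_maxsq (t : ℝ) : HasDerivAt (fun s : ℝ => (max s 0)^2) (2 * max t 0) t := by
  rcases lt_trichotomy t 0 with h | h | h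
  · have he : (fun s : ℝ => (max s 0)^2) =ᶠ[nhds t] fun _ => 0 := by
      filter_upwards [Iio_mem_nhds h] with s hs
      simp [max_eq_right (le_of_lt (Set.mem_Iio.mp hs))]
    simpa [max_eq_right h.le] using (hasDerivAt_const t (0:ℝ)).congr_of_eventuallyEq he
  · subst h
    rw [hasDerivAt_iff_isLittleO]
    rw [Asymptotics.isLittleO_iff]
    intro c hc
    filter_upwards [Metric.ball_mem_nhds 0 hc] with s hs
    have h1 : |max s 0| ≤ |s| := by
      rcases le_total s 0 with h | h <;> simp [max_eq_right, max_eq_left, h, abs_nonneg]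
    have h2 : |s| < c := by simpa [Real.dist_eq] using hs
    have : ‖(max s 0)^2‖ ≤ c * ‖s‖ := by
      rw [Real.norm_eq_abs, Real.norm_eq_abs, abs_pow, sq]
      nlinarith [abs_nonneg s, abs_nonneg (max s 0)]
    simpa using this
  · have he : (fun s : ℝ => (max s 0)^2) =ᶠ[nhds t] fun s => s^2 := by
      filter_upwards [Ioi_mem_nhds h] with s hs
      simp [max_eq_left (le_of_lt (Set.mem_Ioi.mp hs))]
    have := (hasDerivAt_pow 2 t).congr_of_eventuallyEq he
    simpa [max_eq_left h.le, mul_comm] using this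

lemma Bfun_eq (δ₁ : ℝ) (hδ₁ : 0 < δ₁) (d : ℝ) :
    Bfun δ₁ d = 1 - (max ((δ₁ - d)/δ₁) 0)^2 := by
  rw [Bfun]
  rcases le_or_gt d δ₁ with h | h
  · rw [if_pos h, max_eq_left (div_nonneg (by linarith) hδ₁.le)]
    field_simp
    ring
  · rw [if_neg (not_le.mpr h), max_eq_right (by
      apply div_nonpos_of_nonpos_of_nonneg <;> linarith)]
    simp

lemma Bfun_deriv (δ₁ : ℝ) (hδ₁ : 0 < δ₁) (d : ℝ) (hd : 0 ≤ d) :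
    ∃ B', HasDerivAt (Bfun δ₁) B' d ∧ |B'| ≤ 2/δ₁ := by
  have hinner : HasDerivAt (fun s : ℝ => (δ₁ - s)/δ₁) (-1/δ₁) d :=
    ((hasDerivAt_id d).const_sub δ₁).div_const δ₁
  have h1 : HasDerivAt (fun s : ℝ => (max ((δ₁ - s)/δ₁) 0)^2)
      (2 * max ((δ₁ - d)/δ₁) 0 * (-1/δ₁)) d :=
    (hasDerivAt_maxsq _).comp d hinner
  have h2 := h1.const_sub 1
  refine ⟨_, h2.congr_of_eventuallyEq (Filter.Eventually.of_forall fun s => Bfun_eq δ₁ hδ₁ s), ?_⟩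
  have hm0 : 0 ≤ max ((δ₁ - d)/δ₁) 0 := le_max_right _ _
  have hm1 : max ((δ₁ - d)/δ₁) 0 ≤ 1 := by
    apply max_le _ zero_le_one
    rw [div_le_one hδ₁]; linarith
  have hv : -(2 * max ((δ₁ - d)/δ₁) 0 * (-1/δ₁)) = 2 * max ((δ₁ - d)/δ₁) 0 / δ₁ := by ring
  rw [hv, abs_of_nonneg (by positivity)]
  gcongr
  linarith

lemma bfun_eq (Rs δ₂ : ℝ) (hδ₂ : 0 < δ₂) (d : ℝ) (hd : d ≤ Rs) :
    bfun Rs δ₂ d = 1 - (max ((d + δ₂ - Rs)/δ₂) 0)^2 := by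
  rw [bfun]
  rcases lt_or_ge d (Rs - δ₂) with h | h
  · rw [if_pos h, max_eq_right (by
      apply div_nonpos_of_nonpos_of_nonneg <;> linarith)]
    simp
  · rw [if_neg (not_lt.mpr h), if_pos hd,
      max_eq_left (div_nonneg (by linarith) hδ₂.le)]
    field_simp
    ring

lemma bfun_deriv (Rs δ₂ : ℝ) (hδ₂ : 0 < δ₂) (d : ℝ) (hd : d ≠ Rs) :
    ∃ b', HasDerivAt (bfun Rs δ₂) b' d ∧ |b'| ≤ 2/δ₂ := by
  rcases lt_or_gt_of_ne hd with h | h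
  · have hinner : HasDerivAt (fun s : ℝ => (s + δ₂ - Rs)/δ₂) (1/δ₂) d := by
      have := (((hasDerivAt_id d).add_const δ₂).sub_const Rs).div_const δ₂
      simpa using this
    have h1 : HasDerivAt (fun s : ℝ => (max ((s + δ₂ - Rs)/δ₂) 0)^2)
        (2 * max ((d + δ₂ - Rs)/δ₂) 0 * (1/δ₂)) d :=
      (hasDerivAt_maxsq _).comp d hinner
    have h2 := h1.const_sub 1
    have he : bfun Rs δ₂ =ᶠ[nhds d] (fun s => 1 - (max ((s + δ₂ - Rs)/δ₂) 0)^2) := by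
      filter_upwards [Iio_mem_nhds h] with s hs
      exact bfun_eq Rs δ₂ hδ₂ s (Set.mem_Iio.mp hs).le
    refine ⟨_, h2.congr_of_eventuallyEq he, ?_⟩
    have hm0 : 0 ≤ max ((d + δ₂ - Rs)/δ₂) 0 := le_max_right _ _
    have hm1 : max ((d + δ₂ - Rs)/δ₂) 0 ≤ 1 := by
      apply max_le _ zero_le_one
      rw [div_le_one hδ₂]; linarith
    have hv : |-(2 * max ((d + δ₂ - Rs)/δ₂) 0 * (1/δ₂))|
        = 2 * max ((d + δ₂ - Rs)/δ₂) 0 / δ₂ := by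
      rw [abs_neg, abs_of_nonneg (by positivity)]; ring
    rw [hv]
    gcongr
    linarith
  · have he : bfun Rs δ₂ =ᶠ[nhds d] (fun _ => 0) := by
      filter_upwards [Ioi_mem_nhds h] with s hs
      have hs' : Rs < s := Set.mem_Ioi.mp hs
      rw [bfun, if_neg (by push_neg; linarith), if_neg (not_le.mpr hs')]
    exact ⟨0, (hasDerivAt_const d (0:ℝ)).congr_of_eventuallyEq he, by simp; positivity⟩

lemma bfun_abs_le (Rs δ₂ : ℝ) (hδ₂ : 0 < δ₂) (d : ℝ) : |bfun Rs δ₂ d| ≤ 1 := by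
  rcases le_or_gt d Rs with h | h
  · rw [bfun_eq Rs δ₂ hδ₂ d h]
    have hm0 : 0 ≤ max ((d + δ₂ - Rs)/δ₂) 0 := le_max_right _ _
    have hm1 : max ((d + δ₂ - Rs)/δ₂) 0 ≤ 1 := by
      apply max_le _ zero_le_one
      rw [div_le_one hδ₂]; linarith
    rw [abs_le]
    constructor <;> nlinarith
  · rw [bfun, if_neg (by push_neg; linarith), if_neg (not_le.mpr h)]
    simp

lemma Bfun_abs_le (δ₁ : ℝ) (hδ₁ : 0 < δ₁) (d : ℝ) (hd : 0 ≤ d) : |Bfun δ₁ d| ≤ 1 := by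
  rw [Bfun_eq δ₁ hδ₁ d]
  have hm0 : 0 ≤ max ((δ₁ - d)/δ₁) 0 := le_max_right _ _
  have hm1 : max ((δ₁ - d)/δ₁) 0 ≤ 1 := by
    apply max_le _ zero_le_one
    rw [div_le_one hδ₁]; linarith
  rw [abs_le]
  constructor <;> nlinarith

section NormHelpers

variable {E : Type*} [NormedAddCommGroup E] [InnerProductSpace ℝ E]

lemma lip_norm_sub (c : E) : LipschitzWith 1 (fun y : E => ‖y - c‖) := by
  apply LipschitzWith.of_dist_le_mul
  intro a b
  rw [Real.dist_eq, NNReal.coe_one, one_mul, dist_eq_norm]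
  calc |‖a - c‖ - ‖b - c‖| ≤ ‖(a - c) - (b - c)‖ := abs_norm_sub_norm_le _ _
    _ = ‖a - b‖ := by rw [sub_sub_sub_cancel_right]

lemma norm_sub_diff {c x : E} (h : x ≠ c) :
    DifferentiableAt ℝ (fun y : E => ‖y - c‖) x := by
  have h1 : DifferentiableAt ℝ (fun y : E => y - c) x :=
    (differentiable_id.sub_const c).differentiableAt
  have h2 : DifferentiableAt ℝ (norm : E → ℝ) (x - c) :=
    (contDiffAt_norm (n := 1) ℝ (sub_ne_zero.mpr h)).differentiableAt one_ne_zero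
  exact h2.comp x h1

lemma norm_fderiv_norm_sub {c x : E} (h : x ≠ c) :
    ‖fderiv ℝ (fun y : E => ‖y - c‖) x‖ ≤ 1 := by
  simpa using (norm_sub_diff h).hasFDerivAt.le_of_lipschitz (lip_norm_sub c)

end NormHelpers

theorem gradient_beta_bound (Rs δ₁ δ₂ : ℝ) (hδ₂ : 0 < δ₂) (hRs : δ₂ < Rs) (hδ₁ : 0 < δ₁)
    (F O : Type*) [Fintype F] [Fintype O]
    (x : EuclideanSpace ℝ (Fin 2)) (p : F → EuclideanSpace ℝ (Fin 2))
    (o : O → EuclideanSpace ℝ (Fin 2))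
    (hp : ∀ j : F, x ≠ p j) (hpRs : ∀ j : F, ‖x - p j‖ ≠ Rs)
    (ho : ∀ k : O, x ≠ o k) :
    DifferentiableAt ℝ
      (fun y : EuclideanSpace ℝ (Fin 2) =>
        (∏ j : F, bfun Rs δ₂ ‖y - p j‖) * (∏ k : O, Bfun δ₁ ‖y - o k‖)) x ∧
    ‖gradient (fun y : EuclideanSpace ℝ (Fin 2) =>
        (∏ j : F, bfun Rs δ₂ ‖y - p j‖) * (∏ k : O, Bfun δ₁ ‖y - o k‖)) x‖ ≤
      (Fintype.card F) * (2/δ₂) + (Fintype.card O) * (2/δ₁) := by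
  classical
  set φ : F ⊕ O → EuclideanSpace ℝ (Fin 2) → ℝ :=
    Sum.elim (fun j y => bfun Rs δ₂ ‖y - p j‖) (fun k y => Bfun δ₁ ‖y - o k‖) with hφdef
  set c : F ⊕ O → ℝ := Sum.elim (fun _ => 2/δ₂) (fun _ => 2/δ₁) with hcdef
  have key : ∀ i : F ⊕ O, ∃ D : EuclideanSpace ℝ (Fin 2) →L[ℝ] ℝ, HasFDerivAt (φ i) D x ∧ ‖D‖ ≤ c i := by
    rintro (j | k)
    · obtain ⟨b', hb', hb'le⟩ := bfun_deriv Rs δ₂ hδ₂ ‖x - p j‖ (hpRs j)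
      have hg := (norm_sub_diff (hp j)).hasFDerivAt
      refine ⟨b' • fderiv ℝ (fun y : EuclideanSpace ℝ (Fin 2) => ‖y - p j‖) x,
        hb'.comp_hasFDerivAt x hg, ?_⟩
      rw [norm_smul b' (fderiv ℝ (fun y : EuclideanSpace ℝ (Fin 2) => ‖y - p j‖) x),
        Real.norm_eq_abs]
      calc |b'| * ‖fderiv ℝ (fun y : EuclideanSpace ℝ (Fin 2) => ‖y - p j‖) x‖ ≤ (2/δ₂) * 1 := by
            apply mul_le_mul hb'le (norm_fderiv_norm_sub (hp j)) (norm_nonneg _) (by positivity)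
        _ = c (Sum.inl j) := by simp [hcdef]
    · obtain ⟨B', hB', hB'le⟩ := Bfun_deriv δ₁ hδ₁ ‖x - o k‖ (norm_nonneg _)
      have hg := (norm_sub_diff (ho k)).hasFDerivAt
      refine ⟨B' • fderiv ℝ (fun y : EuclideanSpace ℝ (Fin 2) => ‖y - o k‖) x,
        hB'.comp_hasFDerivAt x hg, ?_⟩
      rw [norm_smul B' (fderiv ℝ (fun y : EuclideanSpace ℝ (Fin 2) => ‖y - o k‖) x),
        Real.norm_eq_abs]
      calc |B'| * ‖fderiv ℝ (fun y : EuclideanSpace ℝ (Fin 2) => ‖y - o k‖) x‖ ≤ (2/δ₁) * 1 := by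
            apply mul_le_mul hB'le (norm_fderiv_norm_sub (ho k)) (norm_nonneg _) (by positivity)
        _ = c (Sum.inr k) := by simp [hcdef]
  choose φ' hφ' hbound using key
  have hprod : HasFDerivAt (fun y => ∏ i : F ⊕ O, φ i y)
      (∑ i : F ⊕ O, (∏ j ∈ Finset.univ.erase i, φ j x) • φ' i) x :=
    HasFDerivAt.finset_prod (fun i _ => hφ' i)
  have heq : (fun y => ∏ i : F ⊕ O, φ i y)
      = fun y : EuclideanSpace ℝ (Fin 2) => (∏ j : F, bfun Rs δ₂ ‖y - p j‖) * (∏ k : O, Bfun δ₁ ‖y - o k‖) := by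
    funext y
    rw [Fintype.prod_sum_type]
    rfl
  rw [← heq]
  refine ⟨hprod.differentiableAt, ?_⟩
  have hgrad : ‖gradient (fun y => ∏ i : F ⊕ O, φ i y) x‖
      = ‖fderiv ℝ (fun y => ∏ i : F ⊕ O, φ i y) x‖ := by
    rw [gradient]
    exact LinearIsometryEquiv.norm_map _ _
  rw [hgrad, hprod.fderiv]
  have habs : ∀ i : F ⊕ O, |φ i x| ≤ 1 := by
    rintro (j | k)
    · exact bfun_abs_le Rs δ₂ hδ₂ _
    · exact Bfun_abs_le δ₁ hδ₁ _ (norm_nonneg _)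
  calc ‖∑ i : F ⊕ O, (∏ j ∈ Finset.univ.erase i, φ j x) • φ' i‖
      ≤ ∑ i : F ⊕ O, ‖(∏ j ∈ Finset.univ.erase i, φ j x) • φ' i‖ := norm_sum_le _ _
    _ ≤ ∑ i : F ⊕ O, c i := by
        apply Finset.sum_le_sum
        intro i _
        rw [norm_smul (∏ j ∈ Finset.univ.erase i, φ j x) (φ' i), Real.norm_eq_abs]
        have h1 : |∏ j ∈ Finset.univ.erase i, φ j x| ≤ 1 := by
          rw [Finset.abs_prod]
          exact Finset.prod_le_one (fun j _ => abs_nonneg _) (fun j _ => habs j)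
        have h2 : (0:ℝ) ≤ c i := by
          rcases i with j | k <;> simp [hcdef] <;> positivity
        calc |∏ j ∈ Finset.univ.erase i, φ j x| * ‖φ' i‖ ≤ 1 * c i :=
              mul_le_mul h1 (hbound i) (norm_nonneg _) zero_le_one
          _ = c i := one_mul _
    _ = (Fintype.card F) * (2/δ₂) + (Fintype.card O) * (2/δ₁) := by
        rw [Fintype.sum_sum_type]
        simp only [hcdef, Sum.elim_inl, Sum.elim_inr, Finset.sum_const, nsmul_eq_mul, Finset.card_univ]
end

section
/- The function b is continuous on ℝ, but b is not differentiable at the point d = R_s. -/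
theorem bfun_continuous_not_differentiableAt (Rs δ₂ : ℝ) (hδ₂ : 0 < δ₂) (hRs : δ₂ < Rs) :
    Continuous (bfun Rs δ₂) ∧ ¬ DifferentiableAt ℝ (bfun Rs δ₂) Rs := by
  have hδ₂' : δ₂ ≠ 0 := ne_of_gt hδ₂
  set q : ℝ → ℝ := fun d => -(1/δ₂^2) * (d + 2*δ₂ - Rs)^2 + (2/δ₂) * (d + 2*δ₂ - Rs) with hq
  have hqcont : Continuous q := by fun_prop
  have hqRs : q Rs = 0 := by
    simp only [hq]; field_simp; ring
  have hq1 : q (Rs - δ₂) = 1 := by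
    simp only [hq]; field_simp; ring
  have hg : Continuous (fun d => if d ≤ Rs then q d else 0) := by
    apply Continuous.if _ hqcont continuous_const
    intro a ha
    rw [show {x | x ≤ Rs} = Set.Iic Rs from rfl, frontier_Iic] at ha
    simp only [Set.mem_singleton_iff] at ha
    subst ha
    exact hqRs
  constructor
  · have heq : bfun Rs δ₂ = fun d => if d < Rs - δ₂ then 1 else if d ≤ Rs then q d else 0 := rfl
    rw [heq]
    apply Continuous.if _ continuous_const hg
    intro a ha
    rw [show {x | x < Rs - δ₂} = Set.Iio (Rs - δ₂) from rfl, frontier_Iio] at ha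
    simp only [Set.mem_singleton_iff] at ha
    subst ha
    have : Rs - δ₂ ≤ Rs := by linarith
    simp [this, hq1]
  · intro hdiff
    have hb0 : bfun Rs δ₂ Rs = 0 := by
      have h1 : ¬ Rs < Rs - δ₂ := by linarith
      simp [bfun, h1, hqRs.symm ▸ hqRs]
      field_simp; ring
    have hD := hdiff.hasDerivAt
    set f' := deriv (bfun Rs δ₂) Rs
    -- right derivative is 0
    have hright : HasDerivWithinAt (bfun Rs δ₂) f' (Set.Ioi Rs) Rs := hD.hasDerivWithinAt
    have hzero : HasDerivWithinAt (bfun Rs δ₂) 0 (Set.Ioi Rs) Rs := by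
      have : HasDerivWithinAt (fun _ : ℝ => (0:ℝ)) 0 (Set.Ioi Rs) Rs :=
        (hasDerivAt_const Rs 0).hasDerivWithinAt
      apply this.congr
      · intro x hx
        simp only [Set.mem_Ioi] at hx
        have h1 : ¬ x < Rs - δ₂ := by linarith
        have h2 : ¬ x ≤ Rs := by linarith
        simp [bfun, h1, h2]
      · exact hb0
    have huniq := uniqueDiffWithinAt_Ioi Rs
    have hf'0 : f' = 0 := huniq.eq_deriv _ hright hzero
    -- left derivative is -2/δ₂
    have hleft : HasDerivWithinAt (bfun Rs δ₂) f' (Set.Iio Rs) Rs := hD.hasDerivWithinAt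
    have hqderiv : HasDerivAt q (-(1/δ₂^2) * (2*(Rs + 2*δ₂ - Rs)) + 2/δ₂) Rs := by
      have h1 : HasDerivAt (fun d : ℝ => d + 2*δ₂ - Rs) 1 Rs := by
        simpa using ((hasDerivAt_id Rs).add_const (2*δ₂)).sub_const Rs
      have h2 := ((h1.pow 2).const_mul (-(1/δ₂^2))).add (h1.const_mul (2/δ₂))
      exact h2.congr_deriv (by norm_num)
    have hql : HasDerivWithinAt (bfun Rs δ₂) (-(1/δ₂^2) * (2*(Rs + 2*δ₂ - Rs)) + 2/δ₂)
        (Set.Iio Rs) Rs := by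
      apply hqderiv.hasDerivWithinAt.congr_of_eventuallyEq
      · filter_upwards [Ioo_mem_nhdsLT_of_mem
          (Set.mem_Ioc.2 ⟨show Rs - δ₂ < Rs by linarith, le_refl Rs⟩)] with x hx
        obtain ⟨hx1, hx2⟩ := hx
        have h1 : ¬ x < Rs - δ₂ := by linarith
        have h2 : x ≤ Rs := le_of_lt hx2
        simp [bfun, h1, h2, hq]
      · rw [hb0, hqRs]
    have huniq2 := uniqueDiffWithinAt_Iio Rs
    have hf'l : f' = -(1/δ₂^2) * (2*(Rs + 2*δ₂ - Rs)) + 2/δ₂ := huniq2.eq_deriv _ hleft hql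
    rw [hf'0] at hf'l
    have : (0:ℝ) = -2/δ₂ := by rw [hf'l]; field_simp; ring
    have h2 : (2:ℝ)/δ₂ > 0 := by positivity
    rw [neg_div] at this
    linarith
end
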